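/- For all real q > 1, the infinite product ω(∞,q) = ∏_{i=1}^∞ (1 - q^{-i}) satisfies ω(∞,q) > 1 - q^{-1} - q^{-2} + q^{-5}. -/

import Mathlib

/-- Weierstrass product inequality: `∏ (1 - aᵢ) ≥ 1 - ∑ aᵢ` for `aᵢ ∈ [0,1]`. -/
lemma aux_weierstrass (a : ℕ → ℝ) (h0 : ∀ i, 0 ≤ a i) (h1 : ∀ i, a i ≤ 1) (n : ℕ) :
    1 - ∑ i ∈ Finset.range n, a i ≤ ∏ i ∈ Finset.range n, (1 - a i) := by
  induction n with
  | zero => simp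
  | succ n ih =>
    rw [Finset.prod_range_succ, Finset.sum_range_succ]
    have hP0 : 0 ≤ ∏ i ∈ Finset.range n, (1 - a i) :=
      Finset.prod_nonneg fun i _ => by linarith [h1 i]
    have hP1 : (∏ i ∈ Finset.range n, (1 - a i)) ≤ 1 :=
      Finset.prod_le_one (fun i _ => by linarith [h1 i]) (fun i _ => by linarith [h0 i])
    nlinarith [h0 n, h1 n]

set_option maxHeartbeats 1000000 in
/-- For all real `q > 1`, the infinite product `ω(∞,q) = ∏_{i=1}^∞ (1 - q^{-i})`
satisfies `ω(∞,q) > 1 - q⁻¹ - q⁻² + q⁻⁵`. -/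
theorem stmt_0 (q : ℝ) (hq : 1 < q) :
    1 - q⁻¹ - (q ^ 2)⁻¹ + (q ^ 5)⁻¹ < ∏' i : ℕ, (1 - (q ^ (i + 1))⁻¹) := by
  have hq0 : 0 < q := lt_trans one_pos hq
  set x : ℝ := q⁻¹ with hxdef
  have hx0 : 0 < x := inv_pos.2 hq0
  have hx1 : x < 1 := by
    rw [hxdef, inv_lt_one_iff₀]; exact Or.inr hq
  have h1x : (0:ℝ) < 1 - x := by linarith
  set f : ℕ → ℝ := fun i => 1 - x ^ (i + 1) with hfdef
  -- each factor is in (0,1)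
  have hxpowlt : ∀ i : ℕ, x ^ (i + 1) < 1 := fun i =>
    pow_lt_one₀ hx0.le hx1 (Nat.succ_ne_zero i)
  have hf0 : ∀ i : ℕ, 0 < f i := fun i => by
    have := hxpowlt i; simp only [hfdef]; linarith
  -- summability of x^(i+1)
  have hgeo : Summable (fun i : ℕ => x ^ i) := summable_geometric_of_lt_one hx0.le hx1
  have hgeo1 : Summable (fun i : ℕ => x ^ (i + 1)) := by
    simpa only [pow_succ] using hgeo.mul_right x
  -- summability of the logs
  have hlog : Summable fun i : ℕ => Real.log (f i) := by
    rw [← summable_neg_iff]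
    apply Summable.of_nonneg_of_le (f := fun i => x ^ (i + 1) * (1 - x)⁻¹)
    · intro i
      simp only [hfdef]
      have : Real.log (1 - x ^ (i + 1)) ≤ 0 :=
        Real.log_nonpos (by linarith [hxpowlt i]) (by linarith [pow_pos hx0 (i + 1)])
      linarith
    · intro i
      set t : ℝ := x ^ (i + 1) with htdef
      have ht0 : 0 < t := pow_pos hx0 _
      have htx : t ≤ x := by
        calc t = x ^ (i + 1) := rfl
          _ ≤ x ^ 1 := pow_le_pow_of_le_one hx0.le hx1.le (by omega)
          _ = x := pow_one x
      have h1t : 0 < 1 - t := by linarith [hxpowlt i]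
      have hlogneg : -Real.log (f i) = Real.log ((1 - t)⁻¹) := by
        simp only [hfdef, ← htdef, Real.log_inv]
      rw [hlogneg]
      have hle : Real.log ((1 - t)⁻¹) ≤ (1 - t)⁻¹ - 1 :=
        Real.log_le_sub_one_of_pos (by positivity)
      have huv : (1 - t)⁻¹ ≤ (1 - x)⁻¹ := by
        apply inv_anti₀ h1x; linarith
      have hu : (1 - t) * (1 - t)⁻¹ = 1 := mul_inv_cancel₀ (ne_of_gt h1t)
      have hu0 : 0 < (1 - t)⁻¹ := by positivity
      nlinarith [mul_le_mul_of_nonneg_left huv ht0.le]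
    · exact hgeo1.mul_right _
  -- multipliability
  have hmult : Multipliable f := by
    have h : HasProd (Real.exp ∘ fun i => Real.log (f i))
        (Real.exp (∑' i, Real.log (f i))) := hlog.hasSum.rexp
    have heq : (Real.exp ∘ fun i => Real.log (f i)) = f :=
      funext fun i => Real.exp_log (hf0 i)
    rw [heq] at h
    exact ⟨_, h⟩
  -- geometric tail sum
  have hsum4 : Summable (fun i : ℕ => x ^ (i + 4)) := by
    simpa only [pow_add] using hgeo.mul_right (x ^ 4)
  have htsum4 : ∑' i : ℕ, x ^ (i + 4) = x ^ 4 * (1 - x)⁻¹ := by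
    simp only [pow_add]
    rw [tsum_mul_right, tsum_geometric_of_lt_one hx0.le hx1]
    ring
  -- head product
  have hA : ∏ i ∈ Finset.range 3, f i = (1 - x) * (1 - x ^ 2) * (1 - x ^ 3) := by
    rw [Finset.prod_range_succ, Finset.prod_range_succ, Finset.prod_range_one]
    simp only [hfdef]
    norm_num
  have hApos : 0 < (1 - x) * (1 - x ^ 2) * (1 - x ^ 3) := by
    have h2 : x ^ 2 < 1 := pow_lt_one₀ hx0.le hx1 two_ne_zero
    have h3 : x ^ 3 < 1 := pow_lt_one₀ hx0.le hx1 three_ne_zero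
    have : (0:ℝ) < 1 - x ^ 2 := by linarith
    have : (0:ℝ) < 1 - x ^ 3 := by linarith
    positivity
  -- lower bound for the infinite product
  have hge : (1 - x) * (1 - x ^ 2) * (1 - x ^ 3) * (1 - x ^ 4 * (1 - x)⁻¹)
      ≤ ∏' i, f i := by
    refine ge_of_tendsto hmult.hasProd.tendsto_prod_nat ?_
    filter_upwards [Filter.eventually_ge_atTop 3] with n hn
    obtain ⟨k, rfl⟩ : ∃ k, n = 3 + k := ⟨n - 3, by omega⟩
    rw [Finset.prod_range_add, hA]
    refine mul_le_mul_of_nonneg_left ?_ hApos.le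
    have hs : ∑ i ∈ Finset.range k, x ^ (i + 4) ≤ x ^ 4 * (1 - x)⁻¹ := by
      rw [← htsum4]
      exact Summable.sum_le_tsum _ (fun i _ => by positivity) hsum4
    have hw := aux_weierstrass (fun i => x ^ (i + 4))
      (fun i => by positivity)
      (fun i => (pow_lt_one₀ hx0.le hx1 (by omega)).le) k
    have heq : (∏ i ∈ Finset.range k, (1 - x ^ (i + 4)))
        = ∏ i ∈ Finset.range k, f (3 + i) := by
      refine Finset.prod_congr rfl fun i _ => ?_
      simp only [hfdef]
      ring_nf
    calc 1 - x ^ 4 * (1 - x)⁻¹ ≤ 1 - ∑ i ∈ Finset.range k, x ^ (i + 4) := by linarith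
      _ ≤ ∏ i ∈ Finset.range k, (1 - x ^ (i + 4)) := hw
      _ = ∏ i ∈ Finset.range k, f (3 + i) := heq
  -- the key algebraic identity
  have hAB : (1 - x) * (1 - x ^ 2) * (1 - x ^ 3) * (1 - x ^ 4 * (1 - x)⁻¹)
      = 1 - x - x ^ 2 + x ^ 5 + x ^ 7 - x ^ 9 := by
    field_simp
    ring
  -- rewriting the goal in terms of x and f
  have hgoalprod : (∏' i : ℕ, (1 - (q ^ (i + 1))⁻¹)) = ∏' i, f i := by
    apply tprod_congr
    intro i
    simp only [hfdef, ← inv_pow]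
    rw [hxdef]
  have hx2 : (q ^ 2)⁻¹ = x ^ 2 := by rw [hxdef, inv_pow]
  have hx5 : (q ^ 5)⁻¹ = x ^ 5 := by rw [hxdef, inv_pow]
  rw [hgoalprod, hx2, hx5]
  have hstep : x ^ 9 < x ^ 7 := by
    have h2 : x ^ 2 < 1 := by nlinarith
    calc x ^ 9 = x ^ 7 * x ^ 2 := by ring
      _ < x ^ 7 * 1 := mul_lt_mul_of_pos_left h2 (pow_pos hx0 7)
      _ = x ^ 7 := mul_one _
  calc 1 - x - x ^ 2 + x ^ 5
      < 1 - x - x ^ 2 + x ^ 5 + x ^ 7 - x ^ 9 := by linarith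
    _ = (1 - x) * (1 - x ^ 2) * (1 - x ^ 3) * (1 - x ^ 4 * (1 - x)⁻¹) := hAB.symm
    _ ≤ ∏' i, f i := hge
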